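/- Consider the system of two coupled equations A₁X₁B₁ + C₁X₂D₁ = E₁ and A₂X₂B₂ + C₂X₃D₂ = E₂ over ℂ. If the system has a solution (X₁, X₂, X₃), then rank of the block matrix [[A₁, E₁, C₁, 0, 0],[0, D₁, 0, B₂, 0],[0, 0, A₂, -E₂, C₂]] equals rank[[A₁, C₁, 0],[0, A₂, C₂]] + rank[D₁ B₂]. -/

import Mathlib

open Matrix

private lemma rank_reindex_gen {k l m n : Type*} [Fintype l] [Fintype n]
    (e₁ : k ≃ m) (e₂ : l ≃ n) (A : Matrix k l ℂ) :
    (Matrix.reindex e₁ e₂ A).rank = A.rank := by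
  rw [Matrix.rank, Matrix.rank, Matrix.mulVecLin_reindex, LinearMap.range_comp,
    LinearMap.range_comp, LinearEquiv.range, Submodule.map_top, LinearEquiv.finrank_map_eq]

private lemma rank_fromBlocks_diag {α β γ δ : Type*} [Fintype α] [Fintype β] [Fintype γ]
    [Fintype δ] (A : Matrix α β ℂ) (D : Matrix γ δ ℂ) :
    (Matrix.fromBlocks A 0 0 D).rank = A.rank + D.rank := by
  classical
  set f := A.mulVecLin
  set g := D.mulVecLin
  have key : (Matrix.fromBlocks A 0 0 D).mulVecLin =
      ((LinearEquiv.sumArrowLequivProdArrow α γ ℂ ℂ).symm.toLinearMap.comp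
        ((f.prodMap g).comp
          (LinearEquiv.sumArrowLequivProdArrow β δ ℂ ℂ).toLinearMap)) := by
    refine LinearMap.ext fun x => funext fun i => ?_
    cases i <;>
      simp [Matrix.mulVecLin, Matrix.fromBlocks_mulVec, f, g,
        LinearEquiv.sumArrowLequivProdArrow, Equiv.sumArrowEquivProdArrow]
  rw [Matrix.rank, key, LinearMap.range_comp, LinearMap.range_comp, LinearEquiv.range,
    Submodule.map_top, LinearEquiv.finrank_map_eq]
  have hrange : LinearMap.range (f.prodMap g) =
      (LinearMap.range f).prod (LinearMap.range g) := by
    ext x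
    constructor
    · rintro ⟨y, rfl⟩
      exact ⟨⟨y.1, rfl⟩, ⟨y.2, rfl⟩⟩
    · rintro ⟨⟨y, hy⟩, ⟨z, hz⟩⟩
      exact ⟨(y, z), Prod.ext hy hz⟩
  rw [hrange]
  have e : ((LinearMap.range f).prod (LinearMap.range g)) ≃ₗ[ℂ]
      (LinearMap.range f) × (LinearMap.range g) :=
    { toFun := fun x => (⟨x.1.1, x.2.1⟩, ⟨x.1.2, x.2.2⟩)
      map_add' := fun x y => rfl
      map_smul' := fun c x => rfl
      invFun := fun x => ⟨(x.1.1, x.2.1), ⟨x.1.2, x.2.2⟩⟩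
      left_inv := fun x => rfl
      right_inv := fun x => rfl }
  rw [e.finrank_eq, Module.finrank_prod]
  rfl

private lemma mul_V_helper {p₁ n₁ p₂ n₂ p₃ r : Type*}
    [Fintype p₁] [Fintype n₁] [Fintype p₂] [Fintype n₂] [Fintype p₃]
    [DecidableEq p₁] [DecidableEq n₁] [DecidableEq p₂] [DecidableEq n₂] [DecidableEq p₃]
    (P : Matrix p₁ n₁ ℂ) (Q : Matrix p₂ n₁ ℂ) (S : Matrix p₃ n₂ ℂ)
    (a : Matrix r p₁ ℂ) (b : Matrix r n₁ ℂ) (c : Matrix r p₂ ℂ)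
    (d : Matrix r n₂ ℂ) (e : Matrix r p₃ ℂ) :
    @HMul.hMul _ _ _ instHMulOfFintypeOfMulOfAddCommMonoid
      (fromCols a (fromCols b (fromCols c (fromCols d e))))
      (fromBlocks 1 (fromCols (-P) 0) 0
        (fromBlocks 1 0 (fromRows (-Q) 0)
          (fromBlocks 1 0 0 (fromBlocks 1 0 S 1)))) =
    fromCols a (fromCols (b - a * P - c * Q)
      (fromCols c (fromCols (d + e * S) e))) := by
  ext i (j | j | j | j | j) <;>
    simp [Matrix.mul_apply, Fintype.sum_sum_type, fromBlocks_apply₁₁, fromBlocks_apply₁₂, fromBlocks_apply₂₁, fromBlocks_apply₂₂, fromCols_apply_inl, fromCols_apply_inr, fromRows_apply_inl, fromRows_apply_inr,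
      Matrix.one_apply, mul_ite, sub_eq_add_neg, Finset.sum_add_distrib] <;>
    ring

theorem two_step_chain_rank_eq_34
    {m₁ p₁ q₁ n₁ m₂ p₂ q₂ n₂ p₃ q₃ : ℕ}
    (A₁ : Matrix (Fin m₁) (Fin p₁) ℂ) (B₁ : Matrix (Fin q₁) (Fin n₁) ℂ)
    (C₁ : Matrix (Fin m₁) (Fin p₂) ℂ) (D₁ : Matrix (Fin q₂) (Fin n₁) ℂ)
    (E₁ : Matrix (Fin m₁) (Fin n₁) ℂ)
    (A₂ : Matrix (Fin m₂) (Fin p₂) ℂ) (B₂ : Matrix (Fin q₂) (Fin n₂) ℂ)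
    (C₂ : Matrix (Fin m₂) (Fin p₃) ℂ) (D₂ : Matrix (Fin q₃) (Fin n₂) ℂ)
    (E₂ : Matrix (Fin m₂) (Fin n₂) ℂ)
    (X₁ : Matrix (Fin p₁) (Fin q₁) ℂ) (X₂ : Matrix (Fin p₂) (Fin q₂) ℂ)
    (X₃ : Matrix (Fin p₃) (Fin q₃) ℂ)
    (h₁ : A₁ * X₁ * B₁ + C₁ * X₂ * D₁ = E₁)
    (h₂ : A₂ * X₂ * B₂ + C₂ * X₃ * D₂ = E₂) :
    (Matrix.fromRows
      (Matrix.fromCols A₁ (Matrix.fromCols E₁ (Matrix.fromCols C₁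
        (Matrix.fromCols (0 : Matrix (Fin m₁) (Fin n₂) ℂ)
          (0 : Matrix (Fin m₁) (Fin p₃) ℂ)))))
      (Matrix.fromRows
        (Matrix.fromCols (0 : Matrix (Fin q₂) (Fin p₁) ℂ)
          (Matrix.fromCols D₁ (Matrix.fromCols (0 : Matrix (Fin q₂) (Fin p₂) ℂ)
            (Matrix.fromCols B₂ (0 : Matrix (Fin q₂) (Fin p₃) ℂ)))))
        (Matrix.fromCols (0 : Matrix (Fin m₂) (Fin p₁) ℂ)
          (Matrix.fromCols (0 : Matrix (Fin m₂) (Fin n₁) ℂ)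
            (Matrix.fromCols A₂ (Matrix.fromCols (-E₂) C₂)))))).rank =
    (Matrix.fromRows
      (Matrix.fromCols A₁ (Matrix.fromCols C₁ (0 : Matrix (Fin m₁) (Fin p₃) ℂ)))
      (Matrix.fromCols (0 : Matrix (Fin m₂) (Fin p₁) ℂ)
        (Matrix.fromCols A₂ C₂))).rank +
    (Matrix.fromCols D₁ B₂).rank := by
  classical
  -- abbreviations
  set M1 : Matrix (Fin m₁) (Fin p₁ ⊕ (Fin n₁ ⊕ (Fin p₂ ⊕ (Fin n₂ ⊕ Fin p₃)))) ℂ :=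
    fromCols A₁ (fromCols E₁ (fromCols C₁ (fromCols 0 0))) with hM1
  set M2 : Matrix (Fin q₂) (Fin p₁ ⊕ (Fin n₁ ⊕ (Fin p₂ ⊕ (Fin n₂ ⊕ Fin p₃)))) ℂ :=
    fromCols 0 (fromCols D₁ (fromCols 0 (fromCols B₂ 0))) with hM2
  set M3 : Matrix (Fin m₂) (Fin p₁ ⊕ (Fin n₁ ⊕ (Fin p₂ ⊕ (Fin n₂ ⊕ Fin p₃)))) ℂ :=
    fromCols 0 (fromCols 0 (fromCols A₂ (fromCols (-E₂) C₂))) with hM3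
  set M : Matrix (Fin m₁ ⊕ (Fin q₂ ⊕ Fin m₂)) (Fin p₁ ⊕ (Fin n₁ ⊕ (Fin p₂ ⊕ (Fin n₂ ⊕ Fin p₃)))) ℂ :=
    fromRows M1 (fromRows M2 M3) with hM
  set U : Matrix (Fin m₁ ⊕ (Fin q₂ ⊕ Fin m₂)) (Fin m₁ ⊕ (Fin q₂ ⊕ Fin m₂)) ℂ :=
    fromBlocks 1 0 0 (fromBlocks 1 0 (A₂ * X₂) 1) with hU_def
  set V : Matrix (Fin p₁ ⊕ (Fin n₁ ⊕ (Fin p₂ ⊕ (Fin n₂ ⊕ Fin p₃))))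
      (Fin p₁ ⊕ (Fin n₁ ⊕ (Fin p₂ ⊕ (Fin n₂ ⊕ Fin p₃)))) ℂ :=
    fromBlocks 1 (fromCols (-(X₁ * B₁)) 0) 0
      (fromBlocks 1 0 (fromRows (-(X₂ * D₁)) 0)
        (fromBlocks 1 0 0 (fromBlocks 1 0 (X₃ * D₂) 1))) with hV_def
  set P : Matrix (Fin m₁ ⊕ Fin m₂) (Fin p₁ ⊕ (Fin p₂ ⊕ Fin p₃)) ℂ :=
    fromRows (fromCols A₁ (fromCols C₁ 0)) (fromCols 0 (fromCols A₂ C₂)) with hP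
  set Q : Matrix (Fin q₂) (Fin n₁ ⊕ Fin n₂) ℂ := fromCols D₁ B₂ with hQ
  set M₀ : Matrix (Fin m₁ ⊕ (Fin q₂ ⊕ Fin m₂)) (Fin p₁ ⊕ (Fin n₁ ⊕ (Fin p₂ ⊕ (Fin n₂ ⊕ Fin p₃)))) ℂ :=
    fromRows (fromCols A₁ (fromCols 0 (fromCols C₁ (fromCols 0 0))))
      (fromRows M2
        (fromCols 0 (fromCols 0 (fromCols A₂ (fromCols 0 C₂))))) with hM₀
  have hU : IsUnit U.det := by
    rw [hU_def, Matrix.det_fromBlocks_zero₂₁, Matrix.det_fromBlocks_zero₁₂]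
    simp
  have hV : IsUnit V.det := by
    rw [hV_def, Matrix.det_fromBlocks_zero₂₁, Matrix.det_fromBlocks_zero₁₂,
      Matrix.det_fromBlocks_zero₂₁, Matrix.det_fromBlocks_zero₁₂]
    simp
  have hUM : U * M = fromRows M1 (fromRows M2
      (fromCols 0 (fromCols (A₂ * X₂ * D₁)
        (fromCols A₂ (fromCols (A₂ * X₂ * B₂ + -E₂) C₂))))) := by
    rw [hU_def, hM, fromBlocks_mul_fromRows, fromBlocks_mul_fromRows]
    simp only [Matrix.one_mul, Matrix.zero_mul, zero_add, add_zero]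
    rw [hM2, hM3, mul_fromCols, mul_fromCols, mul_fromCols, mul_fromCols]
    ext (i | i | i) (j | j | j | j | j) <;>
      simp [fromCols_apply_inl, fromCols_apply_inr, fromRows_apply_inl, fromRows_apply_inr, Matrix.mul_assoc]
  have key : U * M * V = M₀ := by
    rw [hUM, hV_def, fromRows_mul, fromRows_mul, hM1, hM2,
      mul_V_helper, mul_V_helper, mul_V_helper]
    have e1 : E₁ - A₁ * (X₁ * B₁) - C₁ * (X₂ * D₁) = 0 := by
      rw [← Matrix.mul_assoc, ← Matrix.mul_assoc, ← h₁]; abel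
    have e2 : A₂ * X₂ * D₁ - A₂ * (X₂ * D₁) = 0 := by
      rw [← Matrix.mul_assoc A₂ X₂ D₁, sub_self]
    have e3 : A₂ * X₂ * B₂ + -E₂ + C₂ * (X₃ * D₂) = 0 := by
      rw [← Matrix.mul_assoc, ← h₂]; abel
    rw [hM₀, hM2]
    simp only [e1, e2, e3, Matrix.zero_mul, Matrix.mul_zero, sub_zero, add_zero, zero_add]
  have hrank1 : M.rank = M₀.rank := by
    rw [← key, Matrix.rank_mul_eq_left_of_isUnit_det V (U * M) hV,
      Matrix.rank_mul_eq_right_of_isUnit_det U M hU]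
  -- identify M₀ with a block diagonal matrix up to reindexing
  let er : (Fin m₁ ⊕ (Fin q₂ ⊕ Fin m₂)) ≃ ((Fin m₁ ⊕ Fin m₂) ⊕ Fin q₂) :=
    { toFun := fun i => match i with
        | .inl a => .inl (.inl a)
        | .inr (.inl b) => .inr b
        | .inr (.inr c) => .inl (.inr c)
      invFun := fun i => match i with
        | .inl (.inl a) => .inl a
        | .inl (.inr c) => .inr (.inr c)
        | .inr b => .inr (.inl b)
      left_inv := by rintro (a | b | c) <;> rfl
      right_inv := by rintro ((a | c) | b) <;> rfl }
  let ec : (Fin p₁ ⊕ (Fin n₁ ⊕ (Fin p₂ ⊕ (Fin n₂ ⊕ Fin p₃)))) ≃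
      ((Fin p₁ ⊕ (Fin p₂ ⊕ Fin p₃)) ⊕ (Fin n₁ ⊕ Fin n₂)) :=
    { toFun := fun j => match j with
        | .inl a => .inl (.inl a)
        | .inr (.inl b) => .inr (.inl b)
        | .inr (.inr (.inl c)) => .inl (.inr (.inl c))
        | .inr (.inr (.inr (.inl d))) => .inr (.inr d)
        | .inr (.inr (.inr (.inr e))) => .inl (.inr (.inr e))
      invFun := fun j => match j with
        | .inl (.inl a) => .inl a
        | .inl (.inr (.inl c)) => .inr (.inr (.inl c))
        | .inl (.inr (.inr e)) => .inr (.inr (.inr (.inr e)))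
        | .inr (.inl b) => .inr (.inl b)
        | .inr (.inr d) => .inr (.inr (.inr (.inl d)))
      left_inv := by rintro (a | b | c | d | e) <;> rfl
      right_inv := by rintro ((a | c | e) | (b | d)) <;> rfl }
  have hsub : M₀ = (fromBlocks P 0 0 Q).submatrix er ec := by
    rw [hM₀, hM2, hP, hQ]
    ext (i | i | i) (j | j | j | j | j) <;>
      simp [er, ec, fromBlocks, fromCols_apply_inl, fromCols_apply_inr, fromRows_apply_inl, fromRows_apply_inr, Matrix.submatrix_apply]
  have hrank2 : M₀.rank = P.rank + Q.rank := by
    rw [hsub, show (fromBlocks P 0 0 Q).submatrix ⇑er ⇑ec =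
        Matrix.reindex er.symm ec.symm (fromBlocks P 0 0 Q) from rfl,
      rank_reindex_gen, rank_fromBlocks_diag]
  rw [← hM, ← hP, ← hQ] at *
  rw [hrank1, hrank2]
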